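/- Let R > 0 and let f : ℝ → [0,1] be measurable, monotone nonincreasing, with f(s) = 1 for s < −R and f(s) = 0 for s > R. Define ω and ρ as: ω = ∫_0^∞ f − ∫_{−∞}^0 (1 − f), ρ(ξ) = ξ f(ξ) + ∫_ξ^∞ f(s) ds. Then for every ξ ∈ ℝ, |ρ(ξ) − ω f(ξ)| ≤ 2R f(ξ)(1 − f(ξ)). -/

import Mathlib

open MeasureTheory

theorem rho_minus_omega_f_bound
    (R : ℝ) (hR : 0 < R) (f : ℝ → ℝ) (hmeas : Measurable f)
    (hrange : ∀ s, f s ∈ Set.Icc (0:ℝ) 1) (hmono : Antitone f)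
    (hleft : ∀ s, s < -R → f s = 1) (hright : ∀ s, R < s → f s = 0)
    (ω : ℝ) (hω : ω = (∫ s in Set.Ioi (0:ℝ), f s) - ∫ s in Set.Iio (0:ℝ), (1 - f s))
    (ρ : ℝ → ℝ) (hρ : ∀ ξ, ρ ξ = ξ * f ξ + ∫ s in Set.Ioi ξ, f s) :
    ∀ ξ : ℝ, |ρ ξ - ω * f ξ| ≤ 2 * R * (f ξ * (1 - f ξ)) := by
  have hint : ∀ a b : ℝ, IntervalIntegrable f volume a b := by
    intro a b
    apply IntervalIntegrable.mono_fun' (g := fun _ => (1:ℝ))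
    · exact intervalIntegrable_const
    · exact hmeas.aestronglyMeasurable
    · filter_upwards with x
      rw [Real.norm_eq_abs, abs_of_nonneg (hrange x).1]
      exact (hrange x).2
  have hint1 : ∀ a b : ℝ, IntervalIntegrable (fun s => 1 - f s) volume a b :=
    fun a b => intervalIntegrable_const.sub (hint a b)
  -- For ξ ≤ R, the tail integral equals the interval integral up to R
  have h1 : ∀ ξ : ℝ, ξ ≤ R → (∫ s in Set.Ioi ξ, f s) = ∫ s in ξ..R, f s := by
    intro ξ hξ
    have hsplit : Set.Ioc ξ R ∪ Set.Ioi R = Set.Ioi ξ := Set.Ioc_union_Ioi_eq_Ioi hξ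
    have hzero : (∫ s in Set.Ioi R, f s) = 0 := by
      rw [setIntegral_congr_fun measurableSet_Ioi (g := fun _ => (0:ℝ))
        (fun x hx => hright x hx)]
      simp
    have hIOn : IntegrableOn f (Set.Ioc ξ R) volume :=
      (intervalIntegrable_iff_integrableOn_Ioc_of_le hξ).mp (hint ξ R)
    have hIOn2 : IntegrableOn f (Set.Ioi R) volume := by
      apply (integrableOn_congr_fun (g := fun _ => (0:ℝ)) (fun x (hx : x ∈ Set.Ioi R) => hright x hx)
        measurableSet_Ioi).mpr
      simp
    rw [← hsplit, setIntegral_union (Set.Ioc_disjoint_Ioi le_rfl) measurableSet_Ioi hIOn hIOn2,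
      hzero, add_zero, intervalIntegral.integral_of_le hξ]
  -- The left integral equals the interval integral from -R
  have h2 : (∫ s in Set.Iio (0:ℝ), (1 - f s)) = ∫ s in (-R)..(0:ℝ), (1 - f s) := by
    have hRle : (-R : ℝ) ≤ 0 := by linarith
    have hsplit : Set.Iio (-R) ∪ Set.Ico (-R) 0 = Set.Iio (0:ℝ) :=
      Set.Iio_union_Ico_eq_Iio hRle
    have hzero : (∫ s in Set.Iio (-R), (1 - f s)) = 0 := by
      rw [setIntegral_congr_fun measurableSet_Iio (g := fun _ => (0:ℝ))
        (fun x hx => by simp [hleft x hx])]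
      simp
    have hIOn : IntegrableOn (fun s => 1 - f s) (Set.Ico (-R) 0) volume := by
      have h := (intervalIntegrable_iff_integrableOn_Ioc_of_le hRle).mp (hint1 (-R) 0)
      exact (integrableOn_Ico_iff_integrableOn_Ioo enorm_ne_top).mpr
        ((integrableOn_Ioc_iff_integrableOn_Ioo enorm_ne_top).mp h)
    have hIOn2 : IntegrableOn (fun s => 1 - f s) (Set.Iio (-R)) volume := by
      apply (integrableOn_congr_fun (g := fun _ => (0:ℝ))
        (fun x hx => by simp [hleft x hx]) measurableSet_Iio).mpr
      simp
    rw [← hsplit, setIntegral_union ((Set.Iio_disjoint_Ici le_rfl).mono_right Set.Ico_subset_Ici_self) measurableSet_Ico hIOn2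
      hIOn, hzero, zero_add, intervalIntegral.integral_of_le hRle,
      integral_Ioc_eq_integral_Ioo, integral_Ico_eq_integral_Ioo]
  intro ξ
  rcases lt_or_ge ξ (-R) with hcase | hcase
  · -- ξ < -R : f ξ = 1, RHS = 0, and ρ ξ = ω
    have hfξ : f ξ = 1 := hleft ξ hcase
    have hmid : (∫ s in ξ..(-R), f s) = -R - ξ := by
      rw [intervalIntegral.integral_of_le hcase.le, integral_Ioc_eq_integral_Ioo,
        setIntegral_congr_fun measurableSet_Ioo (g := fun _ => (1:ℝ))
          (fun x hx => hleft x hx.2)]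
      simp [hcase.le, Real.volume_Ioo, ENNReal.toReal_ofReal (show (0:ℝ) ≤ -R - ξ by linarith)]
    have key : ρ ξ - ω * f ξ = 0 := by
      rw [hρ, hω, hfξ, h1 ξ (by linarith), h1 0 hR.le, h2,
        ← intervalIntegral.integral_add_adjacent_intervals (b := -R) (hint ξ (-R)) (hint (-R) R),
        ← intervalIntegral.integral_add_adjacent_intervals (a := -R) (b := (0:ℝ))
          (hint (-R) 0) (hint 0 R), hmid]
      have : (∫ s in (-R)..(0:ℝ), (1 - f s)) = R - ∫ s in (-R)..(0:ℝ), f s := by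
        rw [intervalIntegral.integral_sub intervalIntegrable_const (hint (-R) 0)]
        simp
      rw [this]; ring
    rw [key, hfξ]
    simp
  · rcases le_or_gt ξ R with hξR | hξR
    · -- main case: -R < ξ ≤ R
      have hfl : 0 ≤ f ξ := (hrange _).1
      have hfu : f ξ ≤ 1 := (hrange _).2
      have key : ρ ξ - ω * f ξ
          = f ξ * (∫ s in (-R)..ξ, (1 - f s)) + (1 - f ξ) * ∫ s in ξ..R, f s := by
        rw [hρ, hω, h1 ξ hξR, h1 0 hR.le, h2,
          ← intervalIntegral.integral_add_adjacent_intervals (a := (0:ℝ)) (b := ξ)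
            (hint 0 ξ) (hint ξ R),
          ← intervalIntegral.integral_add_adjacent_intervals (a := -R) (b := (0:ℝ))
            (hint1 (-R) 0) (hint1 0 ξ)]
        have e1 : (∫ s in (-R)..(0:ℝ), (1 - f s)) = (0 - (-R)) - ∫ s in (-R)..(0:ℝ), f s := by
          rw [intervalIntegral.integral_sub intervalIntegrable_const (hint (-R) 0)]
          simp
        have e2 : (∫ s in (0:ℝ)..ξ, (1 - f s)) = (ξ - 0) - ∫ s in (0:ℝ)..ξ, f s := by
          rw [intervalIntegral.integral_sub intervalIntegrable_const (hint 0 ξ)]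
          simp
        rw [e1, e2]
        ring
      -- bounds
      have hA0 : 0 ≤ ∫ s in (-R)..ξ, (1 - f s) :=
        intervalIntegral.integral_nonneg (by linarith) (fun x _ => by
          have := (hrange x).2; linarith)
      have hB0 : 0 ≤ ∫ s in ξ..R, f s :=
        intervalIntegral.integral_nonneg hξR (fun x _ => (hrange x).1)
      have hA : (∫ s in (-R)..ξ, (1 - f s)) ≤ (ξ + R) * (1 - f ξ) := by
        have : (∫ s in (-R)..ξ, (1 - f s)) ≤ ∫ s in (-R)..ξ, (1 - f ξ) := by
          apply intervalIntegral.integral_mono_on hcase (hint1 (-R) ξ)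
            intervalIntegrable_const
          intro x hx
          have := hmono hx.2
          linarith
        refine this.trans_eq ?_
        rw [intervalIntegral.integral_const, smul_eq_mul]
        ring
      have hB : (∫ s in ξ..R, f s) ≤ (R - ξ) * f ξ := by
        have : (∫ s in ξ..R, f s) ≤ ∫ s in ξ..R, f ξ := by
          apply intervalIntegral.integral_mono_on hξR (hint ξ R) intervalIntegrable_const
          intro x hx
          exact hmono hx.1
        refine this.trans_eq ?_
        rw [intervalIntegral.integral_const, smul_eq_mul]
      rw [key, abs_of_nonneg (add_nonneg (mul_nonneg hfl hA0)
        (mul_nonneg (by linarith) hB0))]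
      nlinarith [mul_le_mul_of_nonneg_left hA hfl, mul_le_mul_of_nonneg_left hB (by linarith : (0:ℝ) ≤ 1 - f ξ)]
    · -- ξ > R : f ξ = 0 and tail integral 0
      have hfξ : f ξ = 0 := hright ξ hξR
      have hzero : (∫ s in Set.Ioi ξ, f s) = 0 := by
        rw [setIntegral_congr_fun measurableSet_Ioi (g := fun _ => (0:ℝ))
          (fun x hx => hright x (hξR.trans hx))]
        simp
      rw [hρ, hzero, hfξ]
      simp
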